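/- For l ≤ −1 and l + δ + 1 < 0, and 0 < t < R ≤ 1, the integral ∫_{√t}^{R} r^{l−δ}(t+r)^{−3} r³ dr is bounded above by C·t^{l+1} for a constant C depending only on l, δ, R. -/

import Mathlib

/-- For `l ≤ −1`, `l + δ + 1 < 0` and `0 < t < R ≤ 1`, the integral
`∫_{√t}^{R} r^{l−δ} (t+r)^{−3} r³ dr` is bounded above by `C · t^{l+1}` for a constant `C`
depending only on `l`, `δ`, `R`. -/
theorem weighted_integral_estimate_outer (l δ R : ℝ) (hl : l ≤ -1) (h : l + δ + 1 < 0)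
    (hR : R ≤ 1) :
    ∃ C : ℝ, 0 < C ∧ ∀ t : ℝ, 0 < t → t < R →
      ∫ r in (Real.sqrt t)..R, r ^ (l - δ) * (t + r) ^ (-3 : ℝ) * r ^ (3 : ℕ) ≤
        C * t ^ (l + 1) := by
  set ε : ℝ := -(l + δ + 1) with hε
  have hε0 : 0 < ε := by simp [hε]; linarith
  refine ⟨1 / ε, by positivity, fun t ht htR => ?_⟩
  have hRpos : 0 < R := lt_trans ht htR
  have hs0 : 0 < Real.sqrt t := Real.sqrt_pos.mpr ht
  have ht1 : t ≤ 1 := le_of_lt (lt_of_lt_of_le htR hR)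
  have htl1 : (0:ℝ) < t ^ (l + 1) := Real.rpow_pos_of_pos ht _
  by_cases hsR : Real.sqrt t ≤ R
  · -- main case
    have hmono : ∫ r in (Real.sqrt t)..R, r ^ (l - δ) * (t + r) ^ (-3 : ℝ) * r ^ (3 : ℕ) ≤
        ∫ r in (Real.sqrt t)..R, t ^ (l + 1) * r ^ (ε - 1) := by
      apply intervalIntegral.integral_mono_on hsR
      · apply ContinuousOn.intervalIntegrable
        apply ContinuousOn.mul
        apply ContinuousOn.mul
        · exact ContinuousOn.rpow_const continuousOn_id (fun x hx => Or.inl (by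
            rw [Set.uIcc_of_le hsR] at hx; exact ne_of_gt (lt_of_lt_of_le hs0 hx.1)))
        · apply ContinuousOn.rpow_const (by fun_prop)
          intro x hx
          rw [Set.uIcc_of_le hsR] at hx
          have hx0 : 0 < x := lt_of_lt_of_le hs0 hx.1
          exact Or.inl (by positivity)
        · fun_prop
      · apply ContinuousOn.intervalIntegrable
        apply ContinuousOn.mul continuousOn_const
        exact ContinuousOn.rpow_const continuousOn_id (fun x hx => Or.inl (by
            rw [Set.uIcc_of_le hsR] at hx; exact ne_of_gt (lt_of_lt_of_le hs0 hx.1)))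
      · intro x hx
        have hx0 : 0 < x := lt_of_lt_of_le hs0 hx.1
        have h1 : (t + x) ^ (-3 : ℝ) * x ^ (3 : ℕ) ≤ 1 := by
          have htx : 0 < t + x := by linarith
          have hp : x ^ (3:ℕ) ≤ (t + x) ^ (3:ℕ) := pow_le_pow_left₀ hx0.le (by linarith) 3
          rw [show ((-3:ℝ)) = -((3:ℕ):ℝ) by norm_num, Real.rpow_neg htx.le,
            Real.rpow_natCast]
          calc ((t + x) ^ (3:ℕ))⁻¹ * x ^ (3:ℕ) ≤ ((t + x) ^ (3:ℕ))⁻¹ * (t + x) ^ (3:ℕ) :=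
                mul_le_mul_of_nonneg_left hp (by positivity)
            _ = 1 := inv_mul_cancel₀ (by positivity)
        have h2 : x ^ (l - δ) = x ^ (2 * (l + 1)) * x ^ (ε - 1) := by
          rw [← Real.rpow_add hx0, hε]; ring_nf
        have h3 : x ^ (2 * (l + 1)) ≤ t ^ (l + 1) := by
          have : x ^ (2 * (l + 1)) ≤ (Real.sqrt t) ^ (2 * (l + 1)) :=
            Real.rpow_le_rpow_of_nonpos hs0 hx.1 (by linarith)
          calc x ^ (2 * (l + 1)) ≤ (Real.sqrt t) ^ (2 * (l + 1)) := this
            _ = t ^ (l + 1) := by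
                rw [Real.sqrt_eq_rpow, ← Real.rpow_mul ht.le]
                congr 1; ring
        calc x ^ (l - δ) * (t + x) ^ (-3 : ℝ) * x ^ (3 : ℕ)
            = x ^ (l - δ) * ((t + x) ^ (-3 : ℝ) * x ^ (3 : ℕ)) := by ring
          _ ≤ x ^ (l - δ) * 1 := by
              apply mul_le_mul_of_nonneg_left h1 (Real.rpow_nonneg hx0.le _)
          _ = x ^ (2 * (l + 1)) * x ^ (ε - 1) := by rw [mul_one, h2]
          _ ≤ t ^ (l + 1) * x ^ (ε - 1) :=
              mul_le_mul_of_nonneg_right h3 (Real.rpow_nonneg hx0.le _)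
    have hint : ∫ r in (Real.sqrt t)..R, t ^ (l + 1) * r ^ (ε - 1) ≤ 1 / ε * t ^ (l + 1) := by
      rw [intervalIntegral.integral_const_mul, integral_rpow
        (Or.inl (by linarith))]
      have hRe : R ^ (ε - 1 + 1) ≤ 1 := by
        rw [show ε - 1 + 1 = ε by ring]
        calc R ^ ε ≤ 1 ^ ε := Real.rpow_le_rpow hRpos.le hR hε0.le
          _ = 1 := Real.one_rpow _
      have hse : 0 ≤ (Real.sqrt t) ^ (ε - 1 + 1) := Real.rpow_nonneg hs0.le _
      rw [mul_comm (1/ε)]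
      apply mul_le_mul_of_nonneg_left _ htl1.le
      rw [show ε - 1 + 1 = ε by ring] at hRe hse ⊢
      gcongr
      linarith
    linarith
  · -- sqrt t > R : integral is nonpositive
    push_neg at hsR
    have : ∫ r in (Real.sqrt t)..R, r ^ (l - δ) * (t + r) ^ (-3 : ℝ) * r ^ (3 : ℕ) ≤ 0 := by
      rw [intervalIntegral.integral_symm]
      simp only [neg_nonpos]
      apply intervalIntegral.integral_nonneg hsR.le
      intro x hx
      have hx0 : 0 < x := lt_of_lt_of_le hRpos hx.1
      have : 0 < t + x := by linarith
      positivity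
    calc _ ≤ (0:ℝ) := this
      _ ≤ 1 / ε * t ^ (l + 1) := by positivity
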